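/- arXiv:1908.05531 — 2 statements merged into one kernel-verified Lean document; each statement's English description precedes it below -/
import Mathlib

section
/- (Local central limit theorem with drifting parameter, the paper's approximation of f(X_ℓ,n_ℓ|m_ℓ).) Fix m > 0, t > 0, v ∈ ℝ and x ∈ ℝ. For each positive integer N set n_N = ⌈tN⌉, m_N = m(1 + v N^{-1/2}) and X_N = n_N m + x m √N. Then lim_{N→∞} m√N · f(X_N, n_N | m_N) = (2πt)^{-1/2} exp( - (x - v t)² / (2t) ). -/
open Real Filter

/-- The gamma density `f(X,n|m) = X^(n-1) exp(-X/m) / (m^n (n-1)!)` for `X ≥ 0`, `0` otherwise. -/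
noncomputable def gammaDensity (m : ℝ) (n : ℕ) (X : ℝ) : ℝ :=
  if 0 ≤ X then X ^ (n - 1) * Real.exp (-X / m) / (m ^ n * (Nat.factorial (n - 1))) else 0

lemma taylor_log_aux {y : ℝ} (hy : |y| ≤ 1/2) :
    |Real.log (1+y) - (y - y^2/2)| ≤ 2*|y|^3 := by
  have h1 : |(-y)| < 1 := by rw [abs_neg]; linarith
  have h2 := Real.abs_log_sub_add_sum_range_le h1 2
  have hs : (∑ i ∈ Finset.range 2, (-y)^(i+1)/((i:ℝ)+1)) = -y + y^2/2 := by
    simp [Finset.sum_range_succ]; ring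
  rw [hs, show (1 : ℝ) - -y = 1 + y by ring] at h2
  rw [show Real.log (1+y) - (y - y^2/2) = (-y + y^2/2) + Real.log (1+y) by ring]
  refine h2.trans ?_
  rw [abs_neg, show (2:ℕ)+1 = 3 from rfl, div_le_iff₀ (by rw [abs_neg] at h1; linarith)]
  nlinarith [pow_nonneg (abs_nonneg y) 3, abs_nonneg y]

lemma remainder_tendsto {ν a : ℕ → ℝ} {c : ℝ}
    (ha : Tendsto a atTop (nhds 0))
    (hc : Tendsto (fun N => ν N * a N ^ 2) atTop (nhds c)) :
    Tendsto (fun N => ν N * (Real.log (1 + a N) - (a N - a N ^ 2 / 2))) atTop (nhds 0) := by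
  apply squeeze_zero_norm' (a := fun N => 2 * |ν N * a N ^ 2| * |a N|)
  · have h12 : ∀ᶠ N in atTop, |a N| ≤ 1/2 := by
      have := Metric.tendsto_nhds.mp ha (1/2) (by norm_num)
      filter_upwards [this] with N hN
      rw [Real.dist_eq, sub_zero] at hN; linarith
    filter_upwards [h12] with N hN
    have hb := taylor_log_aux hN
    calc ‖ν N * (Real.log (1 + a N) - (a N - a N ^ 2 / 2))‖
        = |ν N| * |Real.log (1 + a N) - (a N - a N ^ 2 / 2)| := by
          rw [Real.norm_eq_abs, abs_mul]
      _ ≤ |ν N| * (2*|a N|^3) := by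
          exact mul_le_mul_of_nonneg_left hb (abs_nonneg _)
      _ = 2 * |ν N * a N ^ 2| * |a N| := by
          rw [abs_mul, abs_of_nonneg (sq_nonneg (a N))]
          rw [show |a N|^3 = a N ^2 * |a N| by rw [pow_succ, sq_abs]]
          ring
  · have : Tendsto (fun N => 2 * |ν N * a N ^ 2| * |a N|) atTop (nhds (2 * |c| * |0|)) :=
      (tendsto_const_nhds.mul hc.abs).mul ha.abs
    simpa using this


lemma final_algebra (m a b c s q S Z E : ℝ) (k : ℕ)
    (hm : m ≠ 0) (hb : b ≠ 0) (hq : q ≠ 0) (hS : S ≠ 0) (hE : E ≠ 0) (hc : c ≠ 0) :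
    s / q / S * (a ^ k * (b ^ (k+1))⁻¹ * Z)
      = m * s * (((m * c) * a) ^ k * (Z * (E ^ (k+1))⁻¹)
          / ((m * b) ^ (k+1) * (S * (q * (c / E) ^ (k+1)) / c))) := by
  field_simp
  have hE' : E * E ^ k * E⁻¹ * E⁻¹ ^ k = 1 := by rw [inv_pow]; field_simp
  linear_combination (s * a ^ k * Z * m * m ^ k * b * b ^ k * c * c ^ k) * hE'


set_option maxHeartbeats 2000000 in
/-- Local central limit theorem with drifting parameter: with `n_N = ⌈tN⌉`,
`m_N = m(1 + v N^{-1/2})` and `X_N = n_N m + x m √N`, one has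
`m√N · f(X_N, n_N | m_N) → (2πt)^{-1/2} exp(-(x - vt)²/(2t))` as `N → ∞`. -/
theorem gammaDensity_local_clt_drift (m t v x : ℝ) (hm : 0 < m) (ht : 0 < t) :
    Tendsto (fun N : ℕ =>
        m * Real.sqrt N *
          gammaDensity (m * (1 + v / Real.sqrt N)) ⌈t * N⌉₊
            ((⌈t * N⌉₊ : ℝ) * m + x * m * Real.sqrt N))
      atTop
      (nhds ((Real.sqrt (2 * Real.pi * t))⁻¹ * Real.exp (-(x - v * t) ^ 2 / (2 * t)))) := by
  have hN : Tendsto (fun N : ℕ => (N:ℝ)) atTop atTop := tendsto_natCast_atTop_atTop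
  have hsq : Tendsto Real.sqrt atTop atTop := by
    rw [show Real.sqrt = fun x : ℝ => x ^ ((1:ℝ)/2) from funext fun x => Real.sqrt_eq_rpow x]
    exact tendsto_rpow_atTop (by norm_num)
  have hsqrtN : Tendsto (fun N : ℕ => Real.sqrt N) atTop atTop := hsq.comp hN
  -- ν
  set ν : ℕ → ℝ := fun N => (⌈t*N⌉₊ : ℝ) with hν_def
  have hν_lb : ∀ N : ℕ, t * N ≤ ν N := fun N => Nat.le_ceil _
  have hν_ub : ∀ N : ℕ, ν N ≤ t * N + 1 := fun N =>
    le_of_lt (Nat.ceil_lt_add_one (by positivity))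
  have hν_pos : ∀ N : ℕ, 1 ≤ N → 1 ≤ ν N := by
    intro N hN1
    have : (1:ℕ) ≤ ⌈t*N⌉₊ := Nat.one_le_ceil_iff.mpr (by positivity)
    simpa [hν_def] using (Nat.one_le_cast.mpr this : (1:ℝ) ≤ _)
  have hratio : Tendsto (fun N => ν N / N) atTop (nhds t) := by
    apply tendsto_of_tendsto_of_tendsto_of_le_of_le' (g := fun _ : ℕ => t)
      (h := fun N : ℕ => t + 1/N) tendsto_const_nhds
    · have h1 : Tendsto (fun N : ℕ => (1:ℝ) / N) atTop (nhds 0) :=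
        tendsto_const_nhds.div_atTop hN
      have := (tendsto_const_nhds (x := t) (f := atTop (α := ℕ))).add h1
      simpa using this
    · filter_upwards [eventually_ge_atTop 1] with N hN1
      have hNpos : (0:ℝ) < N := by exact_mod_cast hN1
      rw [le_div_iff₀ hNpos]
      calc t * N ≤ ν N := hν_lb N
        _ = ν N := rfl
    · filter_upwards [eventually_ge_atTop 1] with N hN1
      have hNpos : (0:ℝ) < N := by exact_mod_cast hN1
      rw [div_le_iff₀ hNpos]
      calc ν N ≤ t * N + 1 := hν_ub N
        _ ≤ (t + 1/N) * N := by field_simp; norm_num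
  have hν_atTop : Tendsto ν atTop atTop := by
    apply tendsto_atTop_mono (hν_lb) (Tendsto.const_mul_atTop ht hN)
  have hn_atTop : Tendsto (fun N : ℕ => ⌈t*N⌉₊) atTop atTop :=
    tendsto_natCast_atTop_iff.mp hν_atTop
  have hS : Tendsto (fun N : ℕ => Stirling.stirlingSeq ⌈t*N⌉₊) atTop (nhds (Real.sqrt π)) :=
    Stirling.tendsto_stirlingSeq_sqrt_pi.comp hn_atTop
  have hNν : Tendsto (fun N : ℕ => (N:ℝ) / ν N) atTop (nhds t⁻¹) := by
    simpa [inv_div] using hratio.inv₀ ht.ne'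
  -- u and w
  set u : ℕ → ℝ := fun N => x * Real.sqrt N / ν N with hu_def
  set w : ℕ → ℝ := fun N => v / Real.sqrt N with hw_def
  have hw0 : Tendsto w atTop (nhds 0) := by
    have := (tendsto_const_nhds (x := v) (f := atTop (α := ℕ))).div_atTop hsqrtN
    simpa [hw_def] using this
  have hν_ne : ∀ᶠ N in atTop, ν N ≠ 0 := by
    filter_upwards [eventually_ge_atTop 1] with N h1
    have := hν_pos N h1; linarith
  have hsqrt_pos : ∀ N : ℕ, 1 ≤ N → 0 < Real.sqrt N := by
    intro N h1
    apply Real.sqrt_pos.mpr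
    exact_mod_cast Nat.lt_of_lt_of_le Nat.zero_lt_one h1
  have hu0 : Tendsto u atTop (nhds 0) := by
    have hxN : Tendsto (fun N : ℕ => x / Real.sqrt N) atTop (nhds 0) :=
      tendsto_const_nhds.div_atTop hsqrtN
    have hmul : Tendsto (fun N : ℕ => (x / Real.sqrt N) * ((N:ℝ) / ν N)) atTop
        (nhds (0 * t⁻¹)) := hxN.mul hNν
    rw [zero_mul] at hmul
    apply hmul.congr'
    filter_upwards [eventually_ge_atTop 1] with N h1
    have hs := hsqrt_pos N h1
    rw [hu_def]
    set s := Real.sqrt N with hsdef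
    have hss : s * s = (N:ℝ) := Real.mul_self_sqrt (Nat.cast_nonneg N)
    rw [← hss]
    field_simp
    ring
  have hu2 : Tendsto (fun N => ν N * u N ^ 2) atTop (nhds (x^2/t)) := by
    have hmul : Tendsto (fun N : ℕ => x^2 * ((N:ℝ) / ν N)) atTop (nhds (x^2 * t⁻¹)) :=
      tendsto_const_nhds.mul hNν
    rw [show x^2 * t⁻¹ = x^2/t from (div_eq_mul_inv _ _).symm] at hmul
    apply hmul.congr'
    filter_upwards [eventually_ge_atTop 1, hν_ne] with N h1 hne
    rw [hu_def]
    set s := Real.sqrt N with hsdef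
    have hss : s * s = (N:ℝ) := Real.mul_self_sqrt (Nat.cast_nonneg N)
    have hs : 0 < s := hsqrt_pos N h1
    rw [← hss]
    field_simp
    ring
  have hw2 : Tendsto (fun N => ν N * w N ^ 2) atTop (nhds (t * v^2)) := by
    have hmul : Tendsto (fun N : ℕ => v^2 * (ν N / (N:ℝ))) atTop (nhds (v^2 * t)) :=
      tendsto_const_nhds.mul hratio
    rw [mul_comm (v^2) t] at hmul
    apply hmul.congr'
    filter_upwards [eventually_ge_atTop 1] with N h1
    have hs := hsqrt_pos N h1
    have hNq : (Real.sqrt N)^2 = (N:ℝ) := Real.sq_sqrt (Nat.cast_nonneg N)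
    rw [hw_def]
    set s := Real.sqrt N with hsdef
    have hss : s * s = (N:ℝ) := Real.mul_self_sqrt (Nat.cast_nonneg N)
    rw [← hss]
    field_simp
    rw [← hss]
    rw [Real.sqrt_mul_self hs.le]
  have huw : Tendsto (fun N => ν N * u N * w N) atTop (nhds (x*v)) := by
    apply tendsto_const_nhds.congr'
    filter_upwards [eventually_ge_atTop 1, hν_ne] with N h1 hne
    have hs := (hsqrt_pos N h1).ne'
    rw [hu_def, hw_def]
    field_simp
  -- remainders
  set Ru : ℕ → ℝ := fun N => Real.log (1 + u N) - (u N - u N^2/2) with hRu_def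
  set Rw : ℕ → ℝ := fun N => Real.log (1 + w N) - (w N - w N^2/2) with hRw_def
  have hRu : Tendsto (fun N => ν N * Ru N) atTop (nhds 0) := remainder_tendsto hu0 hu2
  have hRw : Tendsto (fun N => ν N * Rw N) atTop (nhds 0) := remainder_tendsto hw0 hw2
  have h1u : Tendsto (fun N => 1 + u N) atTop (nhds 1) := by
    simpa using (tendsto_const_nhds (x := (1:ℝ)) (f := atTop (α := ℕ))).add hu0
  have h1w : Tendsto (fun N => 1 + w N) atTop (nhds 1) := by
    simpa using (tendsto_const_nhds (x := (1:ℝ)) (f := atTop (α := ℕ))).add hw0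
  have hlogu : Tendsto (fun N => Real.log (1 + u N)) atTop (nhds 0) := by
    have := (Real.continuousAt_log one_ne_zero).tendsto.comp h1u
    simpa [Function.comp_def] using this
  have hRu0 : Tendsto Ru atTop (nhds 0) := by
    have := hlogu.sub (hu0.sub ((hu0.pow 2).div_const 2))
    simpa [hRu_def] using this
  have h1winv : Tendsto (fun N => (1 + w N)⁻¹) atTop (nhds 1) := by
    simpa using h1w.inv₀ one_ne_zero
  have hu_half : ∀ᶠ N in atTop, |u N| ≤ 1/2 := by
    filter_upwards [Metric.tendsto_nhds.mp hu0 (1/2) (by norm_num)] with N h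
    rw [Real.dist_eq, sub_zero] at h; linarith
  have hw_half : ∀ᶠ N in atTop, |w N| ≤ 1/2 := by
    filter_upwards [Metric.tendsto_nhds.mp hw0 (1/2) (by norm_num)] with N h
    rw [Real.dist_eq, sub_zero] at h; linarith
  -- T
  set T : ℕ → ℝ := fun N =>
    (ν N - 1) * Real.log (1 + u N) - ν N * Real.log (1 + w N)
      + ν N * (w N - u N) / (1 + w N) with hT_def
  have hT : Tendsto T atTop (nhds (-(x - v*t)^2/(2*t))) := by
    have hA1 : Tendsto (fun N => -u N) atTop (nhds 0) := by simpa using hu0.neg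
    have hA2 : Tendsto (fun N => -(ν N * u N^2)/2 + u N^2/2) atTop (nhds (-(x^2/t)/2)) := by
      have := (hu2.neg.div_const 2).add ((hu0.pow 2).div_const 2)
      simpa using this
    have hA3 : Tendsto (fun N => ν N * Ru N - Ru N) atTop (nhds 0) := by
      simpa using hRu.sub hRu0
    have hA4 : Tendsto (fun N => (ν N * w N^2)/2) atTop (nhds ((t*v^2)/2)) :=
      hw2.div_const 2
    have hA5 : Tendsto (fun N => -(ν N * Rw N)) atTop (nhds 0) := by simpa using hRw.neg
    have hA6 : Tendsto (fun N => -(ν N * w N^2) * (1 + w N)⁻¹) atTop (nhds (-(t*v^2))) := by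
      simpa using hw2.neg.mul h1winv
    have hA7 : Tendsto (fun N => ν N * u N * w N * (1 + w N)⁻¹) atTop (nhds (x*v)) := by
      simpa using huw.mul h1winv
    have hsum := ((((((hA1.add hA2).add hA3).add hA4).add hA5).add hA6).add hA7)
    have hLeq : (0 + (-(x^2/t)/2 + 0) + 0 + (t*v^2)/2 + 0 + -(t*v^2) + x*v)
        = -(x - v*t)^2/(2*t) := by field_simp; ring
    rw [show ((0:ℝ) + (-(x^2/t)/2) + 0 + (t*v^2)/2 + 0 + -(t*v^2) + x*v)
        = -(x - v*t)^2/(2*t) by field_simp; ring] at hsum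
    apply hsum.congr'
    filter_upwards [hw_half] with N hwN
    have h1wne : (1:ℝ) + w N ≠ 0 := by
      have := (abs_le.mp hwN).1; intro h; linarith
    rw [hT_def, hRu_def, hRw_def]
    field_simp
    ring
  -- F limit
  have hhalf : Tendsto (fun N : ℕ => (N:ℝ)/(2 * ν N)) atTop (nhds (t⁻¹/2)) := by
    have h2 := hNν.div_const 2
    apply h2.congr fun N => ?_
    rw [div_div, mul_comm]
  have hsqrt_half : Tendsto (fun N : ℕ => Real.sqrt ((N:ℝ)/(2*ν N))) atTop
      (nhds (Real.sqrt (t⁻¹/2))) := (Real.continuous_sqrt.tendsto _).comp hhalf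
  have hF : Tendsto (fun N : ℕ => Real.sqrt ((N:ℝ)/(2*ν N)) / Stirling.stirlingSeq ⌈t*(N:ℝ)⌉₊)
      atTop (nhds ((Real.sqrt (2*π*t))⁻¹)) := by
    have hdiv := hsqrt_half.div hS (Real.sqrt_pos.mpr Real.pi_pos).ne'
    rwa [show Real.sqrt (t⁻¹/2) / Real.sqrt π = (Real.sqrt (2*π*t))⁻¹ from ?_] at hdiv
    rw [← Real.sqrt_div (by positivity) π, ← Real.sqrt_inv]
    congr 1
    field_simp
  have hmain : Tendsto (fun N : ℕ =>
      Real.sqrt ((N:ℝ)/(2*ν N)) / Stirling.stirlingSeq ⌈t*(N:ℝ)⌉₊ * Real.exp (T N)) atTop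
      (nhds ((Real.sqrt (2*π*t))⁻¹ * Real.exp (-(x - v*t)^2/(2*t)))) := by
    have := hF.mul ((Real.continuous_exp.tendsto _).comp hT)
    simpa [Function.comp] using this
  have hgoal : Tendsto (fun N : ℕ =>
      m * Real.sqrt N * gammaDensity (m * (1 + v / Real.sqrt N)) ⌈t * N⌉₊
        ((⌈t * N⌉₊ : ℝ) * m + x * m * Real.sqrt N)) atTop
      (nhds ((Real.sqrt (2 * π * t))⁻¹ * Real.exp (-(x - v * t) ^ 2 / (2 * t)))) := by
    refine Tendsto.congr' ?_ hmain
    filter_upwards [eventually_ge_atTop 1, hu_half, hw_half] with N h1 huN hwN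
    have hsN : 0 < Real.sqrt N := hsqrt_pos N h1
    set n := ⌈t * (N:ℝ)⌉₊ with hn_def
    have hn1 : 1 ≤ n := Nat.one_le_ceil_iff.mpr (by positivity)
    have hνn : ν N = (n:ℝ) := rfl
    have hnR : (0:ℝ) < (n:ℝ) := by exact_mod_cast Nat.lt_of_lt_of_le Nat.zero_lt_one hn1
    obtain ⟨k, hk⟩ : ∃ k, n = k + 1 := ⟨n - 1, by omega⟩
    have h1u : (0:ℝ) < 1 + u N := by have := (abs_le.mp huN).1; linarith
    have h1w : (0:ℝ) < 1 + w N := by have := (abs_le.mp hwN).1; linarith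
    have hXeq : ((n:ℕ):ℝ) * m + x * m * Real.sqrt N = m * ν N * (1 + u N) := by
      show _ = m * ν N * (1 + x * Real.sqrt N / ν N)
      rw [hνn]
      field_simp
    have hXpos : (0:ℝ) ≤ ((n:ℕ):ℝ) * m + x * m * Real.sqrt N := by
      rw [hXeq, hνn]; positivity
    have hvw : v / Real.sqrt (N:ℝ) = w N := rfl
    have hden : (0:ℝ) < Real.sqrt (2*(n:ℝ)) * ((n:ℝ)/Real.exp 1)^n :=
      mul_pos (Real.sqrt_pos.mpr (by linarith)) (pow_pos (div_pos hnR (Real.exp_pos 1)) n)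
    have hstir : Stirling.stirlingSeq n * (Real.sqrt (2*(n:ℝ)) * ((n:ℝ)/Real.exp 1)^n)
        = ((Nat.factorial n : ℕ) : ℝ) := by
      rw [Stirling.stirlingSeq, div_mul_cancel₀]
      exact hden.ne'
    have hfac : (n:ℝ) * ((Nat.factorial (n-1) : ℕ) : ℝ) = ((Nat.factorial n : ℕ) : ℝ) := by
      exact_mod_cast congrArg (Nat.cast (R := ℝ)) (Nat.mul_factorial_pred (by omega))
    have hfac2 : ((Nat.factorial (n-1) : ℕ) : ℝ)
        = Stirling.stirlingSeq n * (Real.sqrt (2*(n:ℝ)) * ((n:ℝ)/Real.exp 1)^n) / (n:ℝ) := by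
      rw [hstir, ← hfac]
      field_simp
    have hSpos : 0 < Stirling.stirlingSeq n := by
      rw [hk]; exact Stirling.stirlingSeq'_pos k
    have hexpT : Real.exp (T N) = (1 + u N)^(n-1) * ((1 + w N)^n)⁻¹
        * Real.exp (ν N * (w N - u N) / (1 + w N)) := by
      rw [hT_def]
      have e1 : Real.exp ((ν N - 1) * Real.log (1 + u N)) = (1 + u N)^(n-1) := by
        rw [hνn, show (n:ℝ) - 1 = ((n-1 : ℕ) : ℝ) by rw [Nat.cast_sub hn1, Nat.cast_one]]
        rw [Real.exp_nat_mul, Real.exp_log h1u]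
      have e2 : Real.exp (ν N * Real.log (1 + w N)) = (1 + w N)^n := by
        rw [hνn, Real.exp_nat_mul, Real.exp_log h1w]
      rw [Real.exp_add, Real.exp_sub, e1, e2, div_eq_mul_inv]
    have hexpX : Real.exp (-(m * ν N * (1 + u N)) / (m * (1 + w N)))
        = Real.exp (ν N * (w N - u N) / (1 + w N)) * (Real.exp 1 ^ n)⁻¹ := by
      rw [← Real.exp_nat_mul, mul_one, ← Real.exp_neg, ← Real.exp_add]
      congr 1
      rw [hνn]
      field_simp
      ring
    simp only [gammaDensity]
    rw [if_pos hXpos, hXeq, hvw, hexpT, hexpX, hfac2, hνn,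
      Real.sqrt_div (Nat.cast_nonneg N), hk]
    simp only [Nat.add_sub_cancel]
    clear_value u w ν T Ru Rw
    have hkR : ((k+1 : ℕ) : ℝ) ≠ 0 := by positivity
    exact final_algebra m (1 + u N) (1 + w N) ((k+1 : ℕ) : ℝ) (Real.sqrt N)
      (Real.sqrt (2 * ((k+1 : ℕ) : ℝ))) (Stirling.stirlingSeq (k+1))
      (Real.exp (((k+1 : ℕ) : ℝ) * (w N - u N) / (1 + w N))) (Real.exp 1) k
      hm.ne' h1w.ne' (by positivity) (Stirling.stirlingSeq'_pos k).ne' (Real.exp_ne_zero 1) hkR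
  exact hgoal
end

section
/- (First moment asymptotics of the centered rescaled kernel, line 2 of (d5).) Fix t > 0 and x̂ ∈ ℝ. For each positive integer N set s_N = t N and b_N = 1 + x̂ N^{-1/2} (assume N large enough that b_N > 0). Then lim_{N→∞} √N · ∫₀^∞ (z − 1) · b_N^{-1} (1 + z/(s_N b_N))^{-s_N} dz = x̂. -/
open Real Filter MeasureTheory

lemma shift_lemma (c : ℝ) (g : ℝ → ℝ) :
    ∫ z in Set.Ioi (0:ℝ), g (z + c) = ∫ u in Set.Ioi c, g u := by
  have h := (measurePreserving_add_right volume c).setIntegral_preimage_emb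
      (MeasurableEquiv.addRight c).measurableEmbedding g (Set.Ioi c)
  simpa using h

lemma integral_eval (b s : ℝ) (hb : 0 < b) (hs : 2 < s) :
    ∫ z in Set.Ioi (0:ℝ), (z - 1) * (b⁻¹ * (1 + z / (s * b)) ^ (-s))
      = s * (s * b) / (s - 2) - s * (s * b + 1) / (s - 1) := by
  have hs0 : (0:ℝ) < s := by linarith
  set c : ℝ := s * b with hcdef
  have hc : 0 < c := mul_pos hs0 hb
  have hcs : (0:ℝ) < c ^ s := rpow_pos_of_pos hc s
  -- step 1: rewrite integrand as g (z + c)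
  have step1 : ∫ z in Set.Ioi (0:ℝ), (z - 1) * (b⁻¹ * (1 + z / (s * b)) ^ (-s))
      = ∫ z in Set.Ioi (0:ℝ),
          (fun u => (b⁻¹ * c ^ s) * (u ^ (1 - s)) - ((c + 1) * (b⁻¹ * c ^ s)) * (u ^ (-s))) (z + c) := by
    apply setIntegral_congr_fun measurableSet_Ioi
    intro z hz
    simp only [Set.mem_Ioi] at hz
    dsimp only
    have hzc : 0 < z + c := by linarith
    have h1 : 1 + z / (s * b) = (z + c) / c := by
      field_simp [hcdef]
      ring
    rw [h1, Real.div_rpow hzc.le hc.le, Real.rpow_neg hc.le, div_inv_eq_mul]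
    have h2 : (z + c) ^ (1 - s) = (z + c) * (z + c) ^ (-s) := by
      rw [show (1 : ℝ) - s = 1 + (-s) by ring, Real.rpow_add hzc, Real.rpow_one]
    rw [h2]
    ring
  rw [step1, shift_lemma c (fun u => (b⁻¹ * c ^ s) * (u ^ (1 - s)) - ((c + 1) * (b⁻¹ * c ^ s)) * (u ^ (-s)))]
  have hint1 : IntegrableOn (fun u : ℝ => u ^ (1 - s)) (Set.Ioi c) :=
    integrableOn_Ioi_rpow_of_lt (by linarith) hc
  have hint2 : IntegrableOn (fun u : ℝ => u ^ (-s)) (Set.Ioi c) :=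
    integrableOn_Ioi_rpow_of_lt (by linarith) hc
  rw [integral_sub (hint1.const_mul _) (hint2.const_mul _), MeasureTheory.integral_const_mul,
    MeasureTheory.integral_const_mul, integral_Ioi_rpow_of_lt (by linarith) hc,
    integral_Ioi_rpow_of_lt (by linarith) hc]
  rw [show (1:ℝ) - s + 1 = 2 - s by ring, show -s + 1 = 1 - s by ring]
  have h1 : s - 1 ≠ 0 := ne_of_gt (by linarith)
  have h2 : s - 2 ≠ 0 := ne_of_gt (by linarith)
  have h1' : (1:ℝ) - s ≠ 0 := by intro h; apply h1; linarith
  have h2' : (2:ℝ) - s ≠ 0 := by intro h; apply h2; linarith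
  have eA : b⁻¹ * c ^ s * c ^ (2 - s) = s * s * b := by
    rw [mul_assoc, ← Real.rpow_add hc, show s + (2 - s) = (2:ℝ) by ring,
      show (2:ℝ) = ((2:ℕ):ℝ) by norm_num, Real.rpow_natCast, hcdef]
    field_simp
  have eB : b⁻¹ * c ^ s * c ^ (1 - s) = s := by
    rw [mul_assoc, ← Real.rpow_add hc, show s + (1 - s) = (1:ℝ) by ring,
      Real.rpow_one, hcdef]
    field_simp
  have g1 : b⁻¹ * c ^ s * (-c ^ (2 - s) / (2 - s)) = s * c / (s - 2) := by
    have h : b⁻¹ * c ^ s * (-c ^ (2 - s) / (2 - s)) = -(b⁻¹ * c ^ s * c ^ (2 - s)) / (2 - s) := by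
      ring
    rw [h, eA, div_eq_div_iff h2' h2, hcdef]
    ring
  have g2 : (c + 1) * (b⁻¹ * c ^ s) * (-c ^ (1 - s) / (1 - s)) = s * (c + 1) / (s - 1) := by
    have h : (c + 1) * (b⁻¹ * c ^ s) * (-c ^ (1 - s) / (1 - s))
        = (c + 1) * -(b⁻¹ * c ^ s * c ^ (1 - s)) / (1 - s) := by ring
    rw [h, eB, div_eq_div_iff h1' h1]
    ring
  rw [g1, g2]

/-- First moment asymptotics of the centered rescaled kernel (line 2 of (d5)):
with `s_N = tN` and `b_N = 1 + x̂ N^{-1/2}`,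
`√N ∫₀^∞ (z−1) b_N⁻¹ (1 + z/(s_N b_N))^{-s_N} dz → x̂` as `N → ∞`. -/
theorem centered_kernel_first_moment (t xh : ℝ) (ht : 0 < t) :
    Tendsto (fun N : ℕ =>
        Real.sqrt N *
          ∫ z in Set.Ioi (0 : ℝ),
            (z - 1) * ((1 + xh / Real.sqrt N)⁻¹ *
              (1 + z / (t * N * (1 + xh / Real.sqrt N))) ^ (-(t * N))))
      atTop (nhds xh) := by
  have hsqrt : Tendsto (fun N : ℕ => Real.sqrt N) atTop atTop := by
    have h := (tendsto_rpow_atTop (by norm_num : (0:ℝ) < 1/2)).comp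
      (tendsto_natCast_atTop_atTop (R := ℝ))
    exact h.congr fun N => (Real.sqrt_eq_rpow _).symm
  have hinv_sqrt : Tendsto (fun N : ℕ => (Real.sqrt N)⁻¹) atTop (nhds 0) :=
    tendsto_inv_atTop_zero.comp hsqrt
  have hinvN : Tendsto (fun N : ℕ => ((N : ℝ))⁻¹) atTop (nhds 0) :=
    tendsto_inv_atTop_zero.comp tendsto_natCast_atTop_atTop
  -- limit of the explicit rational expression
  have hlim : Tendsto (fun N : ℕ =>
      (t ^ 2 * xh + 2 * t * (Real.sqrt N)⁻¹) /
        ((t - ((N : ℝ))⁻¹) * (t - 2 * ((N : ℝ))⁻¹))) atTop (nhds xh) := by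
    have hnum : Tendsto (fun N : ℕ => t ^ 2 * xh + 2 * t * (Real.sqrt N)⁻¹)
        atTop (nhds (t ^ 2 * xh)) := by
      have := (hinv_sqrt.const_mul (2 * t)).const_add (t ^ 2 * xh)
      simpa using this
    have hden : Tendsto (fun N : ℕ => (t - ((N : ℝ))⁻¹) * (t - 2 * ((N : ℝ))⁻¹))
        atTop (nhds (t * t)) := by
      have h1 : Tendsto (fun N : ℕ => t - ((N : ℝ))⁻¹) atTop (nhds t) := by
        have := (hinvN.const_mul (1:ℝ)).neg.const_add t
        simpa [sub_eq_add_neg] using this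
      have h2 : Tendsto (fun N : ℕ => t - 2 * ((N : ℝ))⁻¹) atTop (nhds t) := by
        have := (hinvN.const_mul (2:ℝ)).neg.const_add t
        simpa [sub_eq_add_neg] using this
      exact h1.mul h2
    have := hnum.div hden (by positivity)
    have heq : t ^ 2 * xh / (t * t) = xh := by
      field_simp
    rwa [heq] at this
  refine Tendsto.congr' ?_ hlim
  -- eventual equality
  have hb_ev : ∀ᶠ N : ℕ in atTop, 0 < 1 + xh / Real.sqrt N := by
    have : Tendsto (fun N : ℕ => 1 + xh / Real.sqrt N) atTop (nhds 1) := by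
      have := (hinv_sqrt.const_mul xh).const_add 1
      simpa [div_eq_mul_inv, mul_comm] using this
    exact this.eventually (eventually_gt_nhds one_pos)
  have hs_ev : ∀ᶠ N : ℕ in atTop, 2 < t * N :=
    (tendsto_natCast_atTop_atTop.const_mul_atTop ht).eventually_gt_atTop 2
  filter_upwards [hb_ev, hs_ev, eventually_ge_atTop 1] with N hb hs hN1
  have hNpos : (0:ℝ) < N := by exact_mod_cast Nat.pos_of_ne_zero (by omega)
  set r := Real.sqrt N with hrdef
  have hr : 0 < r := Real.sqrt_pos.mpr hNpos
  have hr2 : ((N : ℝ)) = r * r := (Real.mul_self_sqrt (Nat.cast_nonneg N)).symm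
  rw [integral_eval _ _ hb hs]
  rw [hr2] at hs ⊢
  symm
  have hb' : (1:ℝ) + xh / r ≠ 0 := ne_of_gt hb
  have hs1 : t * (r * r) - 1 ≠ 0 := ne_of_gt (by linarith)
  have hs2 : t * (r * r) - 2 ≠ 0 := ne_of_gt (by linarith)
  have hd1 : t - (r * r)⁻¹ ≠ 0 := by
    have : t - (r * r)⁻¹ = (t * (r * r) - 1) / (r * r) := by field_simp
    rw [this]
    positivity
  have hd2 : t - 2 * (r * r)⁻¹ ≠ 0 := by
    have : t - 2 * (r * r)⁻¹ = (t * (r * r) - 2) / (r * r) := by field_simp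
    rw [this]
    positivity
  rw [div_sub_div _ _ hs2 hs1, mul_div_assoc', eq_div_iff (mul_ne_zero hd1 hd2), div_mul_eq_mul_div, div_eq_iff (mul_ne_zero hs2 hs1)]
  field_simp
  ring
end
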